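/- With W₊(x,y) = (((1+ω₊)/(1−ω₊))x, (ω₊/(1+ω₊))y) and ω₊ = ω₊(x,y) as above, fix 0 < a ≤ 1/10 and 0 ≤ b < a, and let D_{b,+} = {(x,y) : 2−a ≤ x ≤ 2−b−10|y|, |y| ≤ a/10}. Then W₊(D_{b,+}) ⊆ D_{b,+}. (The key estimate: the slope α = (−y/ω₊)·(1−ω₊)/(2x(1+ω₊)) of the segment from (x,y) to W₊(x,y) satisfies |α| > 1/10, using |ω₊| ≤ 2|y|, so since sign(Y₊) = sign(y), the image point stays in the triangle.) -/
import Mathlib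


noncomputable def Delta (x y : ℝ) : ℝ := ((x+2)^2 + 8*x^2*y^2) * ((x-2)^2 + 8*x^2*y^2)
noncomputable def r1sq (x y : ℝ) : ℝ := 4 + x^2 + 4*x^2*y^2

noncomputable def omegaP (x y : ℝ) : ℝ := (-4 + x^2 + Real.sqrt (Delta x y)) / (2 * r1sq x y)
noncomputable def omegaM (x y : ℝ) : ℝ := (-4 + x^2 - Real.sqrt (Delta x y)) / (2 * r1sq x y)

noncomputable def Wp (x y : ℝ) : ℝ × ℝ :=
  (((1 + omegaP x y)/(1 - omegaP x y)) * x, (omegaP x y/(1 + omegaP x y)) * y)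

/-- The invariant triangle D_{b,+}. -/
def Dbp (a b : ℝ) : Set (ℝ × ℝ) :=
  {p | 2 - a ≤ p.1 ∧ p.1 ≤ 2 - b - 10*|p.2| ∧ |p.2| ≤ a/10}

set_option maxHeartbeats 1600000 in
theorem stmt_18 (a b : ℝ) (ha0 : 0 < a) (ha : a ≤ 1/10) (hb0 : 0 ≤ b) (hba : b < a) :
    ∀ p ∈ Dbp a b, Wp p.1 p.2 ∈ Dbp a b := by
  rintro ⟨x, y⟩ ⟨hx1, hx2, hy⟩
  simp only at hx1 hx2 hy
  have hy0 : (0:ℝ) ≤ |y| := abs_nonneg y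
  have hya : |y| ≤ 1/100 := hy.trans (by linarith)
  have hx2' : x ≤ 2 := by nlinarith
  have hx1' : (19:ℝ)/10 ≤ x := by linarith
  have hx0 : (0:ℝ) ≤ x := by linarith
  set r := r1sq x y with hrdef
  have hrval : r = 4 + x^2 + 4*x^2*y^2 := rfl
  set s := Real.sqrt (Delta x y) with hsdef
  set u := omegaP x y with hudef
  have huval : u = (-4 + x^2 + s)/(2*r) := rfl
  have hΔ : Delta x y = (x^2-4)^2 + 16*x^2*y^2*r := by rw [hrval]; unfold Delta; ring
  have hΔ0 : 0 ≤ Delta x y := by rw [hΔ]; nlinarith [sq_nonneg (x^2-4), sq_nonneg (x*y)]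
  have hs0 : 0 ≤ s := Real.sqrt_nonneg _
  have hs2 : s^2 = (x^2-4)^2 + 16*x^2*y^2*r := by rw [hsdef, Real.sq_sqrt hΔ0, hΔ]
  clear_value u s r
  have hr4 : (4:ℝ) ≤ r := by rw [hrval]; nlinarith [sq_nonneg x, sq_nonneg (x*y)]
  have hr0 : (0:ℝ) < r := by linarith
  have hsge : 4 - x^2 ≤ s := by
    nlinarith [hs2, hs0, mul_nonneg (mul_nonneg (sq_nonneg x) (sq_nonneg y)) hr0.le]
  have hu0 : 0 ≤ u := by
    rw [huval]; apply div_nonneg <;> linarith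
  have hlin : 2*r*u = -4 + x^2 + s := by
    rw [huval]; field_simp
  have hquad : r * u^2 = (x^2-4)*u + 4*x^2*y^2 := by
    have h2 : (2*r*u)^2 = (-4+x^2+s)^2 := by rw [hlin]
    have h3 : (4*r)*(r*u^2) = (4*r)*((x^2-4)*u + 4*x^2*y^2) := by
      linear_combination h2 + hs2 + (-2*(x^2-4))*hlin
    exact mul_left_cancel₀ (by positivity) h3
  have hu2y : u ≤ 2*|y| := by
    have hneg : (x^2-4)*u ≤ 0 :=
      mul_nonpos_of_nonpos_of_nonneg (by nlinarith) hu0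
    have h1 : r*u^2 ≤ 4*x^2*y^2 := by linarith
    have ha1 : 0 ≤ (r-4)*u^2 := mul_nonneg (by linarith) (sq_nonneg u)
    have ha2 : 0 ≤ (4-x^2)*y^2 := mul_nonneg (by nlinarith) (sq_nonneg y)
    have h2 : u^2 ≤ 4*y^2 := by nlinarith
    nlinarith [sq_abs y, mul_nonneg hu0 hy0]
  have hu50 : u ≤ 1/50 := hu2y.trans (by linarith)
  have h1mu : (0:ℝ) < 1 - u := by linarith
  have h1pu : (0:ℝ) < 1 + u := by linarith
  have habs : |u/(1+u)*y| = u/(1+u)*|y| := by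
    rw [abs_mul, abs_of_nonneg (div_nonneg hu0 h1pu.le)]
  have d1 : (1+u)/(1-u)*x - x = 2*u*x/(1-u) := by
    field_simp; ring
  have d2 : |y| - u/(1+u)*|y| = |y|/(1+u) := by
    field_simp; ring
  have hstep : 2*u*x/(1-u) ≤ 10*(|y|/(1+u)) := by
    rw [div_le_iff₀ h1mu, mul_comm (10:ℝ), div_mul_eq_mul_div, div_mul_eq_mul_div, le_div_iff₀ h1pu]
    nlinarith [mul_nonneg hu0 hy0, mul_nonneg (mul_nonneg hu0 hu0) hy0,
      mul_nonneg hu0 hu0, mul_nonneg (mul_nonneg hu0 hy0) hx0,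
      mul_nonneg (sub_nonneg.mpr hu2y) (mul_nonneg hx0 h1pu.le)]
  simp only [Wp, Dbp, Set.mem_setOf_eq, ← hudef]
  refine ⟨?_, ?_, ?_⟩
  · have hnn : 0 ≤ 2*u*x/(1-u) := by positivity
    linarith [d1]
  · rw [habs]
    linarith [d1, d2, hstep]
  · rw [habs]
    have hle : u/(1+u) ≤ 1 := by rw [div_le_one h1pu]; linarith
    nlinarith [mul_le_mul_of_nonneg_right hle hy0]
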